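/- Let H, K be Hilbert spaces and let R : K → H and E : H → H be bounded linear operators. If Range(E) ⊆ Range(R), then there exists δ > 0 such that ‖R* x‖ ≥ δ ‖E* x‖ for all x ∈ H. -/

import Mathlib

open Filter Topology

theorem stmt13 {H K : Type*}
    [NormedAddCommGroup H] [InnerProductSpace ℂ H] [CompleteSpace H]
    [NormedAddCommGroup K] [InnerProductSpace ℂ K] [CompleteSpace K]
    (R : K →L[ℂ] H) (E : H →L[ℂ] H)
    (h : Set.range E ⊆ Set.range R) :
    ∃ δ : ℝ, 0 < δ ∧ ∀ x : H,
      δ * ‖(ContinuousLinearMap.adjoint E) x‖ ≤ ‖(ContinuousLinearMap.adjoint R) x‖ := by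
  classical
  set N : Submodule ℂ K := LinearMap.ker (R : K →ₗ[ℂ] H) with hN
  have hNclosed : IsClosed (N : Set K) := ContinuousLinearMap.isClosed_ker R
  haveI : CompleteSpace N := hNclosed.completeSpace_coe
  set Ks : Submodule ℂ K := Nᗮ with hKs
  have hNN : Ksᗮ = N := Submodule.orthogonal_orthogonal N
  -- f : Ks → H, restriction of R, injective
  let f : Ks →ₗ[ℂ] H := (R : K →ₗ[ℂ] H).comp Ks.subtype
  have hfinj : Function.Injective f := by
    intro v w hvw
    have hsub : (↑v - ↑w : K) ∈ N := by
      simp only [hN, LinearMap.mem_ker, map_sub]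
      simpa [f, sub_eq_zero] using hvw
    have hsub' : (↑v - ↑w : K) ∈ Ks := Ks.sub_mem v.2 w.2
    have : (↑v - ↑w : K) = 0 := by
      have := Submodule.inner_right_of_mem_orthogonal (K := N) hsub hsub'
      simpa [inner_self_eq_zero] using this
    exact Subtype.ext (sub_eq_zero.mp this)
  -- range E ⊆ range f
  have hmem : ∀ u : H, E u ∈ LinearMap.range f := by
    intro u
    obtain ⟨v, hv⟩ := h ⟨u, rfl⟩
    refine ⟨Ks.orthogonalProjectionOnto v, ?_⟩
    have hd : v - ↑(Ks.orthogonalProjectionOnto v) ∈ Ksᗮ :=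
      Submodule.sub_starProjection_mem_orthogonal v
    rw [hNN] at hd
    have : R (v - ↑(Ks.orthogonalProjectionOnto v)) = 0 := hd
    have : R ↑(Ks.orthogonalProjectionOnto v) = R v := by
      have h2 := this
      rw [map_sub, sub_eq_zero] at h2
      exact h2.symm
    simpa [f, hv] using this
  let e := LinearEquiv.ofInjective f hfinj
  let T : H →ₗ[ℂ] Ks :=
    e.symm.toLinearMap.comp (LinearMap.codRestrict (LinearMap.range f) (E : H →ₗ[ℂ] H) hmem)
  have hfT : ∀ u : H, f (T u) = E u := by
    intro u
    have : e (T u) = ⟨E u, hmem u⟩ := by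
      simp only [T, LinearMap.comp_apply, LinearEquiv.coe_coe]
      rw [LinearEquiv.apply_symm_apply]
      rfl
    have h2 := congrArg (Subtype.val) this
    simpa [e, LinearEquiv.ofInjective_apply] using h2
  -- continuity via closed graph theorem
  have hcont : Continuous T := by
    apply LinearMap.continuous_of_seq_closed_graph
    intro u x y hux hTy
    apply hfinj
    have h1 : Tendsto (fun n => f (T (u n))) atTop (𝓝 (f y)) := by
      have : Continuous f := R.continuous.comp continuous_subtype_val
      exact (this.tendsto y).comp hTy
    have h2 : Tendsto (fun n => E (u n)) atTop (𝓝 (E x)) :=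
      (E.continuous.tendsto x).comp hux
    have h3 : (fun n => f (T (u n))) = fun n => E (u n) := funext fun n => hfT (u n)
    rw [h3] at h1
    rw [hfT]
    exact tendsto_nhds_unique h1 h2
  let Tc : H →L[ℂ] Ks := ⟨T, hcont⟩
  let S : H →L[ℂ] K := Ks.subtypeL.comp Tc
  have hRS : R.comp S = E := by
    ext u
    exact hfT u
  have hadj : ContinuousLinearMap.adjoint E =
      (ContinuousLinearMap.adjoint S).comp (ContinuousLinearMap.adjoint R) := by
    rw [← hRS, ContinuousLinearMap.adjoint_comp]
  set c := ‖ContinuousLinearMap.adjoint S‖ with hc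
  have hc0 : 0 ≤ c := norm_nonneg _
  refine ⟨(c + 1)⁻¹, by positivity, fun x => ?_⟩
  have hb : ‖(ContinuousLinearMap.adjoint E) x‖ ≤ c * ‖(ContinuousLinearMap.adjoint R) x‖ := by
    rw [hadj]
    exact (ContinuousLinearMap.adjoint S).le_opNorm _
  have hcp : (0:ℝ) < c + 1 := by linarith
  rw [inv_mul_le_iff₀ hcp]
  nlinarith [norm_nonneg ((ContinuousLinearMap.adjoint R) x)]
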